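/- arXiv:2305.16102 — 6 statements merged into one kernel-verified Lean document; each statement's English description precedes it below -/
import Mathlib

section
/- Consider the attention-based GNN dynamics with arbitrary row-stochastic aggregation operators: X^(t+1) := σ(P^(t)X^(t)W^(t)) with X^(0) ∈ ℝ^{N×d}, where each P^(t) ∈ ℝ^{N×N} is row-stochastic (entrywise nonnegative with every row summing to 1), W^(t) ∈ ℝ^{d×d}, and σ: ℝ → ℝ is applied entrywise. Under assumptions (A3) and (A4), there exists C > 0 such that ‖X^(t)‖_max ≤ C for all t ≥ 0, where ‖M‖_max := max_{i,j}|M_{ij}|. -/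
open Matrix Filter

noncomputable section

/-- Frobenius norm of a real matrix. -/
def frobNorm {N d : ℕ} (X : Matrix (Fin N) (Fin d) ℝ) : ℝ :=
  Real.sqrt (∑ i, ∑ j, (X i j) ^ 2)

/-- μ(X) = ‖X − 1γ_X‖_F where γ_X = (1/N)1ᵀX. -/
def gnnMu {N d : ℕ} (X : Matrix (Fin N) (Fin d) ℝ) : ℝ :=
  frobNorm (X - Matrix.of fun _i j => (∑ k, X k j) / N)

/-- Row-stochastic matrix. -/
def rowStochastic {N : ℕ} (P : Matrix (Fin N) (Fin N) ℝ) : Prop :=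
  (∀ i j, 0 ≤ P i j) ∧ ∀ i, ∑ j, P i j = 1

/-- The set 𝒫_{G,ε}. -/
def Pset {N : ℕ} (G : SimpleGraph (Fin N)) (ε : ℝ) : Set (Matrix (Fin N) (Fin N) ℝ) :=
  {P | rowStochastic P ∧ (∀ i j, G.Adj i j → ε ≤ P i j ∧ P i j ≤ 1) ∧
    ∀ i j, ¬ G.Adj i j → P i j = 0}

/-- The set 𝒟 of diagonal matrices with diagonal entries in [0,1]. -/
def Dset (N : ℕ) : Set (Matrix (Fin N) (Fin N) ℝ) :=
  {D | D.IsDiag ∧ ∀ i, 0 ≤ D i i ∧ D i i ≤ 1}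

/-- The set 𝒟_δ of diagonal matrices with diagonal entries in [0,δ]. -/
def DsetB (N : ℕ) (δ : ℝ) : Set (Matrix (Fin N) (Fin N) ℝ) :=
  {D | D.IsDiag ∧ ∀ i, 0 ≤ D i i ∧ D i i ≤ δ}

/-- The set ℳ_{G,ε} = {DP : D ∈ 𝒟, P ∈ 𝒫_{G,ε}}. -/
def Mset {N : ℕ} (G : SimpleGraph (Fin N)) (ε : ℝ) : Set (Matrix (Fin N) (Fin N) ℝ) :=
  {M | ∃ D ∈ Dset N, ∃ P ∈ Pset G ε, M = D * P}

/-- The set ℳ_{G,ε,δ} = {DP : D ∈ 𝒟_δ, P ∈ 𝒫_{G,ε}}. -/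
def MsetB {N : ℕ} (G : SimpleGraph (Fin N)) (ε δ : ℝ) : Set (Matrix (Fin N) (Fin N) ℝ) :=
  {M | ∃ D ∈ DsetB N δ, ∃ P ∈ Pset G ε, M = D * P}

/-- Backward product P^(t) P^(t-1) ⋯ P^(0). -/
def bprod {N : ℕ} (P : ℕ → Matrix (Fin N) (Fin N) ℝ) : ℕ → Matrix (Fin N) (Fin N) ℝ
  | 0 => P 0
  | t + 1 => P (t + 1) * bprod P t

/-- The orthogonal projection J = I − (1/N)11ᵀ onto the complement of span{1}. -/
def projJ (N : ℕ) : Matrix (Fin N) (Fin N) ℝ :=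
  1 - (N : ℝ)⁻¹ • Matrix.of fun _ _ => (1 : ℝ)

/-- Matrix ∞-norm: maximum absolute row sum. -/
def infNorm {N : ℕ} (M : Matrix (Fin N) (Fin N) ℝ) : ℝ :=
  ⨆ i, ∑ j, |M i j|

/-- Forward product of entrywise absolute values |W^(0)||W^(1)|⋯|W^(k)|. -/
def Wabs {d : ℕ} (W : ℕ → Matrix (Fin d) (Fin d) ℝ) : ℕ → Matrix (Fin d) (Fin d) ℝ
  | 0 => (W 0).map (fun x => |x|)
  | k + 1 => Wabs W k * (W (k + 1)).map (fun x => |x|)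

/-- Q̂_{t₀, t₀+k} = P^{t₀+k} D^{t₀+k-1} P^{t₀+k-1} ⋯ D^{t₀} P^{t₀}. -/
def Qhat {N : ℕ} (D P : ℕ → Matrix (Fin N) (Fin N) ℝ) (t₀ : ℕ) :
    ℕ → Matrix (Fin N) (Fin N) ℝ
  | 0 => P t₀
  | k + 1 => P (t₀ + k + 1) * D (t₀ + k) * Qhat D P t₀ k

/-- Q_{0,k} = D^(k) P^(k) ⋯ D^(0) P^(0). -/
def Qprod {N : ℕ} (D P : ℕ → Matrix (Fin N) (Fin N) ℝ) : ℕ → Matrix (Fin N) (Fin N) ℝ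
  | 0 => D 0 * P 0
  | k + 1 => D (k + 1) * P (k + 1) * Qprod D P k

/-- P^(m+k) P^(m+k-1) ⋯ P^(m). -/
def PprodFrom {N : ℕ} (P : ℕ → Matrix (Fin N) (Fin N) ℝ) (m : ℕ) :
    ℕ → Matrix (Fin N) (Fin N) ℝ
  | 0 => P m
  | k + 1 => P (m + k + 1) * PprodFrom P m k

/-- D^(m+k) P^(m+k) ⋯ D^(m) P^(m). -/
def QprodFrom {N : ℕ} (D P : ℕ → Matrix (Fin N) (Fin N) ℝ) (m : ℕ) :
    ℕ → Matrix (Fin N) (Fin N) ℝ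
  | 0 => D m * P m
  | k + 1 => D (m + k + 1) * P (m + k + 1) * QprodFrom D P m k

/-- Joint spectral radius of a set of square matrices (w.r.t. the Frobenius norm;
the value is independent of the chosen norm). -/
def JSR {n : ℕ} (A : Set (Matrix (Fin n) (Fin n) ℝ)) : ℝ :=
  Filter.limsup (fun k : ℕ =>
    sSup {x : ℝ | ∃ M : Fin k → Matrix (Fin n) (Fin n) ℝ,
      (∀ i, M i ∈ A) ∧ x = frobNorm (List.ofFn M).prod ^ (k : ℝ)⁻¹}) Filter.atTop

/-- Spectral radius of a real square matrix: max modulus of its complex eigenvalues. -/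
def specRad {n : ℕ} (M : Matrix (Fin n) (Fin n) ℝ) : ℝ :=
  sSup {r : ℝ | ∃ z ∈ spectrum ℂ (M.map Complex.ofReal), r = ‖z‖}

end

section Aux

lemma aux_mul_rowStochastic {N : ℕ} {A B : Matrix (Fin N) (Fin N) ℝ}
    (hA : rowStochastic A) (hB : rowStochastic B) : rowStochastic (A * B) := by
  obtain ⟨hA0, hA1⟩ := hA
  obtain ⟨hB0, hB1⟩ := hB
  constructor
  · intro i j
    rw [Matrix.mul_apply]
    exact Finset.sum_nonneg fun k _ => mul_nonneg (hA0 i k) (hB0 k j)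
  · intro i
    simp only [Matrix.mul_apply]
    rw [Finset.sum_comm]
    calc ∑ k, ∑ j, A i k * B k j = ∑ k, A i k * ∑ j, B k j := by
          simp [Finset.mul_sum]
      _ = 1 := by simp [hB1, hA1 i]

lemma aux_bprod_rowStochastic {N : ℕ} (P : ℕ → Matrix (Fin N) (Fin N) ℝ)
    (hP : ∀ t, rowStochastic (P t)) : ∀ t, rowStochastic (bprod P t) := by
  intro t
  induction t with
  | zero => exact hP 0
  | succ t ih => exact aux_mul_rowStochastic (hP (t + 1)) ih

lemma aux_Wabs_nonneg {d : ℕ} (W : ℕ → Matrix (Fin d) (Fin d) ℝ) :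
    ∀ k i j, 0 ≤ Wabs W k i j := by
  intro k
  induction k with
  | zero => intro i j; exact abs_nonneg _
  | succ k ih =>
    intro i j
    show 0 ≤ (Wabs W k * (W (k + 1)).map (fun x => |x|)) i j
    rw [Matrix.mul_apply]
    exact Finset.sum_nonneg fun l _ => mul_nonneg (ih i l) (abs_nonneg _)

lemma aux_entry_bound {N d : ℕ} (P : Matrix (Fin N) (Fin N) ℝ)
    (hP : ∀ i j, 0 ≤ P i j) (Y Z : Matrix (Fin N) (Fin d) ℝ)
    (hYZ : ∀ i j, |Y i j| ≤ Z i j) (Wm : Matrix (Fin d) (Fin d) ℝ) (i : Fin N) (j : Fin d) :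
    |(P * Y * Wm) i j| ≤ (P * Z * Wm.map (fun x => |x|)) i j := by
  rw [Matrix.mul_apply, Matrix.mul_apply]
  calc |∑ m, (P * Y) i m * Wm m j| ≤ ∑ m, |(P * Y) i m * Wm m j| :=
        Finset.abs_sum_le_sum_abs _ _
    _ ≤ ∑ m, (P * Z) i m * ((Wm.map (fun x => |x|)) m j) := by
        apply Finset.sum_le_sum
        intro m _
        rw [abs_mul]
        have hZnn : 0 ≤ (P * Z) i m := by
          rw [Matrix.mul_apply]
          exact Finset.sum_nonneg fun l _ =>
            mul_nonneg (hP i l) (le_trans (abs_nonneg _) (hYZ l m))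
        apply mul_le_mul _ le_rfl (abs_nonneg _) hZnn
        rw [Matrix.mul_apply, Matrix.mul_apply]
        calc |∑ l, P i l * Y l m| ≤ ∑ l, |P i l * Y l m| :=
              Finset.abs_sum_le_sum_abs _ _
          _ ≤ ∑ l, P i l * Z l m := by
              apply Finset.sum_le_sum
              intro l _
              rw [abs_mul, abs_of_nonneg (hP i l)]
              exact mul_le_mul_of_nonneg_left (hYZ l m) (hP i l)

end Aux

/-- under (A3) and (A4), trajectories are uniformly bounded in max-norm. -/
theorem stmt_2 (N d : ℕ) (hN : 1 ≤ N) (hd : 1 ≤ d)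
    (P : ℕ → Matrix (Fin N) (Fin N) ℝ) (hP : ∀ t, rowStochastic (P t))
    (W : ℕ → Matrix (Fin d) (Fin d) ℝ) (σ : ℝ → ℝ)
    (X : ℕ → Matrix (Fin N) (Fin d) ℝ)
    (hdyn : ∀ t, X (t + 1) = (P t * X t * W t).map σ)
    (hA3 : ∃ C : ℝ, ∀ k i j, |Wabs W k i j| ≤ C)
    (hA4 : σ 0 = 0 ∧ ∀ x : ℝ, x ≠ 0 → 0 ≤ σ x / x ∧ σ x / x ≤ 1) :
    ∃ C > 0, ∀ t i j, |X t i j| ≤ C := by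
  obtain ⟨C0, hC0⟩ := hA3
  obtain ⟨hσ0, hσr⟩ := hA4
  have hσ : ∀ x : ℝ, |σ x| ≤ |x| := by
    intro x
    by_cases hx : x = 0
    · simp [hx, hσ0]
    · obtain ⟨h1, h2⟩ := hσr x hx
      have hle : |σ x / x| ≤ 1 := abs_le.mpr ⟨by linarith, h2⟩
      calc |σ x| = |σ x / x| * |x| := by
            rw [← abs_mul, div_mul_cancel₀ _ hx]
        _ ≤ 1 * |x| := mul_le_mul_of_nonneg_right hle (abs_nonneg x)
        _ = |x| := one_mul _
  set A := ∑ a, ∑ b, |X 0 a b| with hAdef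
  have hXA : ∀ a b, |X 0 a b| ≤ A := by
    intro a b
    calc |X 0 a b| ≤ ∑ b', |X 0 a b'| :=
          Finset.single_le_sum (f := fun b' => |X 0 a b'|) (fun b' _ => abs_nonneg _) (Finset.mem_univ b)
      _ ≤ A := by
          rw [hAdef]
          exact Finset.single_le_sum (f := fun a' => ∑ b', |X 0 a' b'|)
            (fun a' _ => Finset.sum_nonneg fun b' _ => abs_nonneg _) (Finset.mem_univ a)
  have hA0 : 0 ≤ A :=
    Finset.sum_nonneg fun a _ => Finset.sum_nonneg fun b _ => abs_nonneg _
  have hC00 : 0 ≤ C0 := le_trans (abs_nonneg _) (hC0 0 ⟨0, hd⟩ ⟨0, hd⟩)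
  have hWC : ∀ k (b j : Fin d), Wabs W k b j ≤ C0 := fun k b j =>
    le_trans (le_abs_self _) (hC0 k b j)
  have key : ∀ t (i : Fin N) (j : Fin d),
      |X (t + 1) i j| ≤ (bprod P t * (X 0).map (fun x => |x|) * Wabs W t) i j := by
    intro t
    induction t with
    | zero =>
      intro i j
      rw [hdyn 0]
      calc |σ ((P 0 * X 0 * W 0) i j)| ≤ |(P 0 * X 0 * W 0) i j| := hσ _
        _ ≤ (P 0 * (X 0).map (fun x => |x|) * (W 0).map (fun x => |x|)) i j :=
            aux_entry_bound (P 0) (hP 0).1 (X 0) _ (fun a b => le_refl _) (W 0) i j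
    | succ t ih =>
      intro i j
      rw [hdyn (t + 1)]
      calc |σ ((P (t + 1) * X (t + 1) * W (t + 1)) i j)|
          ≤ |(P (t + 1) * X (t + 1) * W (t + 1)) i j| := hσ _
        _ ≤ (P (t + 1) * (bprod P t * (X 0).map (fun x => |x|) * Wabs W t) *
              (W (t + 1)).map (fun x => |x|)) i j :=
            aux_entry_bound (P (t + 1)) (hP (t + 1)).1 _ _ ih (W (t + 1)) i j
        _ = (bprod P (t + 1) * (X 0).map (fun x => |x|) * Wabs W (t + 1)) i j := by
            show _ = ((P (t + 1) * bprod P t) * (X 0).map (fun x => |x|) *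
              (Wabs W t * (W (t + 1)).map (fun x => |x|))) i j
            simp only [Matrix.mul_assoc]
  refine ⟨A + (d : ℝ) * (A * C0) + 1, by positivity, ?_⟩
  intro t i j
  match t with
  | 0 =>
    have := hXA i j
    have hdnn : (0:ℝ) ≤ (d : ℝ) * (A * C0) := by positivity
    linarith
  | t + 1 =>
    have hrs := aux_bprod_rowStochastic P hP t
    have hbound : (bprod P t * (X 0).map (fun x => |x|) * Wabs W t) i j
        ≤ (d : ℝ) * (A * C0) := by
      rw [Matrix.mul_apply]
      calc ∑ b, (bprod P t * (X 0).map (fun x => |x|)) i b * Wabs W t b j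
          ≤ ∑ _b : Fin d, A * C0 := by
            apply Finset.sum_le_sum
            intro b _
            have h1 : (bprod P t * (X 0).map (fun x => |x|)) i b ≤ A := by
              rw [Matrix.mul_apply]
              calc ∑ a, bprod P t i a * ((X 0).map (fun x => |x|)) a b
                  ≤ ∑ a, bprod P t i a * A := by
                    apply Finset.sum_le_sum
                    intro a _
                    exact mul_le_mul_of_nonneg_left (hXA a b) (hrs.1 i a)
                _ = A := by rw [← Finset.sum_mul, hrs.2 i, one_mul]
            have h1n : 0 ≤ (bprod P t * (X 0).map (fun x => |x|)) i b := by
              rw [Matrix.mul_apply]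
              exact Finset.sum_nonneg fun a _ => mul_nonneg (hrs.1 i a) (abs_nonneg _)
            exact mul_le_mul h1 (hWC t b j) (aux_Wabs_nonneg W t b j) hA0
        _ = (d : ℝ) * (A * C0) := by
            rw [Finset.sum_const, Finset.card_univ, Fintype.card_fin, nsmul_eq_mul]
    have h2 := key t i j
    linarith
end

section
/- Consider the attention-based GNN dynamics. Under assumptions (A2), (A3) and (A4), there exists ε > 0 such that for all t ≥ 0 and every edge (i,j) ∈ E(G), the attention coefficient satisfies P^(t)_{ij} ≥ ε. -/
open Matrix Filter

/-- under (A2)-(A4), attention coefficients on edges are uniformly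
bounded below by some ε > 0. -/
theorem stmt_3 (N d : ℕ) (hN : 2 ≤ N) (hd : 1 ≤ d)
    (G : SimpleGraph (Fin N)) [DecidableRel G.Adj]
    (hconn : G.Connected) (hnb : ¬ G.Colorable 2)
    (Ψ : (Fin d → ℝ) → (Fin d → ℝ) → ℝ)
    (hA2 : Continuous fun p : (Fin d → ℝ) × (Fin d → ℝ) => Ψ p.1 p.2)
    (W : ℕ → Matrix (Fin d) (Fin d) ℝ) (σ : ℝ → ℝ)
    (X : ℕ → Matrix (Fin N) (Fin d) ℝ)
    (P : ℕ → Matrix (Fin N) (Fin N) ℝ)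
    (hP : ∀ t i j, P t i j =
      if G.Adj i j then
        Real.exp (Ψ ((X t * W t) i) ((X t * W t) j)) /
          ∑ k ∈ G.neighborFinset i, Real.exp (Ψ ((X t * W t) i) ((X t * W t) k))
      else 0)
    (hdyn : ∀ t, X (t + 1) = (P t * X t * W t).map σ)
    (hA3 : ∃ C : ℝ, ∀ k i j, |Wabs W k i j| ≤ C)
    (hA4 : σ 0 = 0 ∧ ∀ x : ℝ, x ≠ 0 → 0 ≤ σ x / x ∧ σ x / x ≤ 1) :
    ∃ ε > 0, ∀ t i j, G.Adj i j → ε ≤ P t i j := by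
  classical
  -- |σ x| ≤ |x|
  have hσ : ∀ x : ℝ, |σ x| ≤ |x| := by
    intro x
    by_cases hx : x = 0
    · simp [hx, hA4.1]
    · obtain ⟨h1, h2⟩ := hA4.2 x hx
      have habs : |σ x / x| ≤ 1 := abs_le.2 ⟨by linarith, h2⟩
      calc |σ x| = |σ x / x * x| := by rw [div_mul_cancel₀ _ hx]
        _ = |σ x / x| * |x| := abs_mul _ _
        _ ≤ 1 * |x| := mul_le_mul_of_nonneg_right habs (abs_nonneg x)
        _ = |x| := one_mul _
  obtain ⟨C, hC⟩ := hA3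
  -- entries of Wabs are nonnegative
  have hWnn : ∀ k (i j : Fin d), 0 ≤ Wabs W k i j := by
    intro k
    induction k with
    | zero => intro i j; simpa [Wabs] using abs_nonneg (W 0 i j)
    | succ k ih =>
      intro i j
      simp only [Wabs, Matrix.mul_apply]
      exact Finset.sum_nonneg fun l _ =>
        mul_nonneg (ih i l) (by simpa using abs_nonneg (W (k + 1) l j))
  have hCW : ∀ k (i j : Fin d), Wabs W k i j ≤ C := fun k i j =>
    le_trans (le_abs_self _) (hC k i j)
  have hd0 : 0 < d := hd
  have hC0 : 0 ≤ C := le_trans (hWnn 0 ⟨0, hd0⟩ ⟨0, hd0⟩) (hCW 0 ⟨0, hd0⟩ ⟨0, hd0⟩)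
  -- P entries are nonnegative
  have hPnn : ∀ t (i j : Fin N), 0 ≤ P t i j := by
    intro t i j
    rw [hP]
    split
    · exact div_nonneg (Real.exp_pos _).le
        (Finset.sum_nonneg fun k _ => (Real.exp_pos _).le)
    · exact le_refl _
  -- P row sums are at most 1
  have hPsum : ∀ t (i : Fin N), ∑ j, P t i j ≤ 1 := by
    intro t i
    have heq : ∑ j, P t i j =
        (∑ k ∈ G.neighborFinset i, Real.exp (Ψ ((X t * W t) i) ((X t * W t) k))) /
        (∑ k ∈ G.neighborFinset i, Real.exp (Ψ ((X t * W t) i) ((X t * W t) k))) := by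
      simp only [hP]
      rw [Finset.sum_div, SimpleGraph.neighborFinset_eq_filter, Finset.sum_filter]
      exact (Finset.sum_filter _ _).symm
    rw [heq]
    rcases eq_or_lt_of_le (Finset.sum_nonneg
        (fun k (_ : k ∈ G.neighborFinset i) => (Real.exp_pos
          (Ψ ((X t * W t) i) ((X t * W t) k))).le)) with h | h
    · rw [← h]; norm_num
    · rw [div_self h.ne']
  -- bound on the initial matrix
  set B0 : ℝ := ∑ i, ∑ j, |X 0 i j| with hB0def
  have hB0nn : 0 ≤ B0 := Finset.sum_nonneg fun i _ =>
    Finset.sum_nonneg fun j _ => abs_nonneg _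
  have hB0 : ∀ (i : Fin N) (j : Fin d), |X 0 i j| ≤ B0 := by
    intro i j
    calc |X 0 i j| ≤ ∑ j', |X 0 i j'| :=
          Finset.single_le_sum (f := fun j' => |X 0 i j'|)
            (fun j' _ => abs_nonneg _) (Finset.mem_univ j)
      _ ≤ B0 := Finset.single_le_sum
          (fun i' (_ : i' ∈ Finset.univ) => Finset.sum_nonneg fun j' _ => abs_nonneg (X 0 i' j'))
          (Finset.mem_univ i)
  -- key inductive bound
  have key : ∀ t (i : Fin N) (j : Fin d),
      |(X t * W t) i j| ≤ B0 * ∑ m, Wabs W t m j := by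
    intro t
    induction t with
    | zero =>
      intro i j
      rw [Matrix.mul_apply]
      calc |∑ l, X 0 i l * W 0 l j| ≤ ∑ l, |X 0 i l * W 0 l j| :=
            Finset.abs_sum_le_sum_abs _ _
        _ = ∑ l, |X 0 i l| * |W 0 l j| := by simp [abs_mul]
        _ ≤ ∑ l, B0 * Wabs W 0 l j := by
            refine Finset.sum_le_sum fun l _ => ?_
            have hw : Wabs W 0 l j = |W 0 l j| := rfl
            rw [hw]
            exact mul_le_mul_of_nonneg_right (hB0 i l) (abs_nonneg _)
        _ = B0 * ∑ m, Wabs W 0 m j := (Finset.mul_sum _ _ _).symm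
    | succ t ih =>
      have hWsnn : ∀ l : Fin d, 0 ≤ B0 * ∑ m, Wabs W t m l := fun l =>
        mul_nonneg hB0nn (Finset.sum_nonneg fun m _ => hWnn t m l)
      have hX : ∀ (i : Fin N) (l : Fin d), |X (t + 1) i l| ≤ B0 * ∑ m, Wabs W t m l := by
        intro i l
        rw [hdyn t, Matrix.map_apply, Matrix.mul_assoc]
        refine le_trans (hσ _) ?_
        rw [Matrix.mul_apply]
        calc |∑ k, P t i k * (X t * W t) k l| ≤ ∑ k, |P t i k * (X t * W t) k l| :=
              Finset.abs_sum_le_sum_abs _ _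
          _ = ∑ k, P t i k * |(X t * W t) k l| := by
              refine Finset.sum_congr rfl fun k _ => ?_
              rw [abs_mul, abs_of_nonneg (hPnn t i k)]
          _ ≤ ∑ k, P t i k * (B0 * ∑ m, Wabs W t m l) :=
              Finset.sum_le_sum fun k _ =>
                mul_le_mul_of_nonneg_left (ih k l) (hPnn t i k)
          _ = (∑ k, P t i k) * (B0 * ∑ m, Wabs W t m l) := (Finset.sum_mul _ _ _).symm
          _ ≤ 1 * (B0 * ∑ m, Wabs W t m l) :=
              mul_le_mul_of_nonneg_right (hPsum t i) (hWsnn l)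
          _ = B0 * ∑ m, Wabs W t m l := one_mul _
      intro i j
      rw [Matrix.mul_apply]
      calc |∑ l, X (t + 1) i l * W (t + 1) l j|
            ≤ ∑ l, |X (t + 1) i l * W (t + 1) l j| := Finset.abs_sum_le_sum_abs _ _
        _ = ∑ l, |X (t + 1) i l| * |W (t + 1) l j| := by simp [abs_mul]
        _ ≤ ∑ l, (B0 * ∑ m, Wabs W t m l) * |W (t + 1) l j| :=
            Finset.sum_le_sum fun l _ =>
              mul_le_mul_of_nonneg_right (hX i l) (abs_nonneg _)
        _ = B0 * ∑ l, ∑ m, Wabs W t m l * |W (t + 1) l j| := by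
            rw [Finset.mul_sum]
            exact Finset.sum_congr rfl fun l _ => by
              rw [mul_assoc]
              exact congrArg (B0 * ·) (Finset.sum_mul _ _ _)
        _ = B0 * ∑ m, ∑ l, Wabs W t m l * |W (t + 1) l j| := by rw [Finset.sum_comm]
        _ = B0 * ∑ m, Wabs W (t + 1) m j := by
            refine congrArg _ (Finset.sum_congr rfl fun m _ => ?_)
            simp [Wabs, Matrix.mul_apply]
  -- uniform bound on rows of X t * W t
  set B1 : ℝ := B0 * (d * C) with hB1def
  have hB1nn : 0 ≤ B1 := mul_nonneg hB0nn (mul_nonneg (Nat.cast_nonneg d) hC0)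
  have hYB : ∀ t (i : Fin N), ‖(X t * W t) i‖ ≤ B1 := by
    intro t i
    rw [pi_norm_le_iff_of_nonneg hB1nn]
    intro j
    rw [Real.norm_eq_abs]
    refine le_trans (key t i j) ?_
    refine mul_le_mul_of_nonneg_left ?_ hB0nn
    calc ∑ m, Wabs W t m j ≤ ∑ _m : Fin d, C := Finset.sum_le_sum fun m _ => hCW t m j
      _ = d * C := by simp [Finset.sum_const, nsmul_eq_mul]
  -- bound Ψ on the compact set
  obtain ⟨M, hM⟩ := (isCompact_closedBall (0 : (Fin d → ℝ) × (Fin d → ℝ)) B1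
    ).exists_bound_of_continuousOn hA2.continuousOn
  have hΨbound : ∀ t (i j : Fin N), |Ψ ((X t * W t) i) ((X t * W t) j)| ≤ M := by
    intro t i j
    have hmem : ((X t * W t) i, (X t * W t) j) ∈
        Metric.closedBall (0 : (Fin d → ℝ) × (Fin d → ℝ)) B1 := by
      rw [Metric.mem_closedBall, dist_zero_right, Prod.norm_def]
      exact max_le (hYB t i) (hYB t j)
    simpa [Real.norm_eq_abs] using hM _ hmem
  refine ⟨Real.exp (-M) / (N * Real.exp M),
    div_pos (Real.exp_pos _) (mul_pos (by positivity) (Real.exp_pos _)), ?_⟩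
  intro t i j hadj
  rw [hP, if_pos hadj]
  have hjmem : j ∈ G.neighborFinset i := (SimpleGraph.mem_neighborFinset G i j).2 hadj
  have hSpos : 0 < ∑ k ∈ G.neighborFinset i,
      Real.exp (Ψ ((X t * W t) i) ((X t * W t) k)) :=
    Finset.sum_pos (fun k _ => Real.exp_pos _) ⟨j, hjmem⟩
  have hSle : (∑ k ∈ G.neighborFinset i,
      Real.exp (Ψ ((X t * W t) i) ((X t * W t) k))) ≤ N * Real.exp M := by
    calc (∑ k ∈ G.neighborFinset i, Real.exp (Ψ ((X t * W t) i) ((X t * W t) k)))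
        ≤ ∑ _k ∈ G.neighborFinset i, Real.exp M :=
          Finset.sum_le_sum fun k _ =>
            Real.exp_le_exp.2 (le_trans (le_abs_self _) (hΨbound t i k))
      _ = (G.neighborFinset i).card * Real.exp M := by
          rw [Finset.sum_const, nsmul_eq_mul]
      _ ≤ N * Real.exp M := by
          refine mul_le_mul_of_nonneg_right ?_ (Real.exp_pos _).le
          have := Finset.card_le_univ (G.neighborFinset i)
          simp only [Finset.card_univ, Fintype.card_fin] at this
          exact_mod_cast this
  have hnum : Real.exp (-M) ≤ Real.exp (Ψ ((X t * W t) i) ((X t * W t) j)) :=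
    Real.exp_le_exp.2 (neg_le_of_abs_le (hΨbound t i j))
  exact div_le_div₀ (Real.exp_pos _).le hnum hSpos hSle
end

section
/- Let G be connected and non-bipartite and let ε > 0. Then there exist T ∈ ℕ and c > 0 such that for any matrices P^(0), P^(1), …, P^(T) ∈ 𝒫_{G,ε}, every entry of the product P^(T)P^(T−1)⋯P^(0) lies in the interval [c, 1]. -/
open Matrix Filter

section Aux

open SimpleGraph

variable {N : ℕ} {G : SimpleGraph (Fin N)}

/-- Every vertex has a neighbor. -/
lemma exists_neighbor (hN : 2 ≤ N) (hconn : G.Connected) (j : Fin N) :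
    ∃ x, G.Adj j x := by
  haveI : Nontrivial (Fin N) := Fin.nontrivial_iff_two_le.mpr hN
  obtain ⟨y, hy⟩ := exists_ne j
  obtain ⟨w⟩ := hconn.preconnected j y
  cases w with
  | nil => exact absurd rfl hy.symm
  | cons h p => exact ⟨_, h⟩

/-- Walks can be padded by 2k. -/
lemma walk_pad (hN : 2 ≤ N) (hconn : G.Connected) {i j : Fin N} {n : ℕ}
    (h : ∃ w : G.Walk i j, w.length = n) (k : ℕ) :
    ∃ w : G.Walk i j, w.length = n + 2 * k := by
  induction k with
  | zero => simpa using h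
  | succ k ih =>
    obtain ⟨w, hw⟩ := ih
    obtain ⟨x, hx⟩ := exists_neighbor hN hconn j
    refine ⟨w.append (Walk.cons hx (Walk.cons hx.symm Walk.nil)), ?_⟩
    simp [Walk.length_append, hw]; ring

/-- An odd closed walk exists at any root when G is not 2-colorable. -/
lemma exists_odd_closed_walk (hconn : G.Connected) (hnb : ¬ G.Colorable 2) (r : Fin N) :
    ∃ w : G.Walk r r, Odd w.length := by
  classical
  have wv : ∀ v : Fin N, G.Walk r v := fun v => (hconn.preconnected r v).some
  by_contra hno
  push_neg at hno
  refine hnb ⟨SimpleGraph.Coloring.mk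
    (fun v => if Even (wv v).length then (0 : Fin 2) else 1) ?_⟩
  intro u v huv hc
  have hpar : Even (wv u).length ↔ Even (wv v).length := by
    by_cases h1 : Even (wv u).length <;> by_cases h2 : Even (wv v).length <;>
      simp [h1, h2] at hc ⊢
  set w : G.Walk r r := (wv u).append (Walk.cons huv (wv v).reverse) with hwdef
  have hlen : w.length = (wv u).length + ((wv v).length + 1) := by
    simp [hwdef, Walk.length_append, Walk.length_cons, Walk.length_reverse]
  have := hno w
  rw [hlen] at this
  rcases Nat.even_or_odd (wv u).length with he | ho
  · obtain ⟨b, hb⟩ := hpar.mp he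
    obtain ⟨a, ha⟩ := he
    exact this ⟨a + b, by omega⟩
  · have h2 : Odd (wv v).length := by
      rcases Nat.even_or_odd (wv v).length with h | h
      · exact absurd (hpar.mpr h) (Nat.not_even_iff_odd.mpr ho)
      · exact h
    obtain ⟨a, ha⟩ := ho
    obtain ⟨b, hb⟩ := h2
    exact this ⟨a + b + 1, by omega⟩

/-- There is a uniform length M such that every pair of vertices is joined
by a walk of length exactly M, with M ≥ 1. -/
lemma exists_uniform_walk_length (hN : 2 ≤ N) (hconn : G.Connected)
    (hnb : ¬ G.Colorable 2) :
    ∃ M : ℕ, 1 ≤ M ∧ ∀ i j : Fin N, ∃ w : G.Walk i j, w.length = M := by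
  classical
  have r : Fin N := ⟨0, by omega⟩
  have wv : ∀ v : Fin N, G.Walk r v := fun v => (hconn.preconnected r v).some
  obtain ⟨cyc, hcyc⟩ := exists_odd_closed_walk hconn hnb r
  set C := cyc.length with hC
  set L := Finset.univ.sup (fun v : Fin N => (wv v).length) with hL
  refine ⟨2 * L + C, by rcases hcyc with ⟨c, hc⟩; omega, ?_⟩
  intro i j
  have ha : (wv i).length ≤ L :=
    Finset.le_sup (f := fun v : Fin N => (wv v).length) (Finset.mem_univ i)
  have hb : (wv j).length ≤ L :=
    Finset.le_sup (f := fun v : Fin N => (wv v).length) (Finset.mem_univ j)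
  set a := (wv i).length
  set b := (wv j).length
  rcases Nat.even_or_odd (a + b) with hev | hod
  · -- base walk i → r → r (cycle) → j, length a + C + b, pad to 2L+C
    have hbase : ∃ w : G.Walk i j, w.length = a + (C + b) := by
      refine ⟨(wv i).reverse.append (cyc.append (wv j)), ?_⟩
      simp [Walk.length_append, Walk.length_reverse]; rfl
    obtain ⟨k, hk⟩ : ∃ k, 2 * L + C = (a + (C + b)) + 2 * k := by
      rcases hev with ⟨m, hm⟩; exact ⟨L - m, by omega⟩
    rw [hk]; exact walk_pad hN hconn hbase k
  · -- base walk i → r → j, length a + b, pad to 2L+C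
    have hbase : ∃ w : G.Walk i j, w.length = a + b := by
      refine ⟨(wv i).reverse.append (wv j), ?_⟩
      simp [Walk.length_append, Walk.length_reverse]; rfl
    obtain ⟨k, hk⟩ : ∃ k, 2 * L + C = (a + b) + 2 * k := by
      rcases hod with ⟨m, hm⟩; rcases hcyc with ⟨c, hc⟩
      exact ⟨L - m + c, by omega⟩
    rw [hk]; exact walk_pad hN hconn hbase k

variable {ε : ℝ}

lemma bprod_nonneg {P : ℕ → Matrix (Fin N) (Fin N) ℝ} (hε : 0 < ε)
    (t : ℕ) (hP : ∀ s, s ≤ t → P s ∈ Pset G ε) :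
    ∀ i j, 0 ≤ bprod P t i j := by
  induction t with
  | zero => exact fun i j => ((hP 0 le_rfl).1).1 i j
  | succ t ih =>
    intro i j
    rw [bprod, Matrix.mul_apply]
    refine Finset.sum_nonneg fun k _ => mul_nonneg (((hP (t+1) le_rfl).1).1 i k)
      (ih (fun s hs => hP s (by omega)) k j)

lemma bprod_rowsum {P : ℕ → Matrix (Fin N) (Fin N) ℝ} (hε : 0 < ε)
    (t : ℕ) (hP : ∀ s, s ≤ t → P s ∈ Pset G ε) :
    ∀ i, ∑ j, bprod P t i j = 1 := by
  induction t with
  | zero => exact fun i => ((hP 0 le_rfl).1).2 i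
  | succ t ih =>
    intro i
    have ih' := ih (fun s hs => hP s (by omega))
    calc ∑ j, bprod P (t+1) i j
        = ∑ j, ∑ k, P (t+1) i k * bprod P t k j := by
          simp [bprod, Matrix.mul_apply]
      _ = ∑ k, P (t+1) i k * ∑ j, bprod P t k j := by
          rw [Finset.sum_comm]; simp [Finset.mul_sum]
      _ = ∑ k, P (t+1) i k := by simp [ih']
      _ = 1 := ((hP (t+1) le_rfl).1).2 i

lemma bprod_lower {P : ℕ → Matrix (Fin N) (Fin N) ℝ} (hε : 0 < ε)
    (t : ℕ) (hP : ∀ s, s ≤ t → P s ∈ Pset G ε) :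
    ∀ i j, (∃ w : G.Walk i j, w.length = t + 1) →
      ε ^ (t + 1) ≤ bprod P t i j := by
  induction t with
  | zero =>
    rintro i j ⟨w, hw⟩
    have hadj : G.Adj i j := SimpleGraph.Walk.adj_of_length_eq_one hw
    simpa [bprod] using ((hP 0 le_rfl).2.1 i j hadj).1
  | succ t ih =>
    rintro i j ⟨w, hw⟩
    cases w with
    | nil => simp at hw
    | @cons _ k _ h p =>
      have hp : p.length = t + 1 := by simpa using hw
      have hle := ih (fun s hs => hP s (by omega)) k j ⟨p, hp⟩
      have hPk : ε ≤ P (t+1) i k := ((hP (t+1) le_rfl).2.1 i k h).1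
      have hnn : ∀ m, 0 ≤ bprod P t m j :=
        fun m => bprod_nonneg hε t (fun s hs => hP s (by omega)) m j
      rw [bprod, Matrix.mul_apply]
      calc ε ^ (t + 1 + 1) = ε * ε ^ (t + 1) := by ring
        _ ≤ P (t+1) i k * bprod P t k j :=
            mul_le_mul hPk hle (by positivity) (((hP (t+1) le_rfl).1).1 i k)
        _ ≤ ∑ m, P (t+1) i m * bprod P t m j := by
            refine Finset.single_le_sum (fun m _ =>
              mul_nonneg (((hP (t+1) le_rfl).1).1 i m) (hnn m)) (Finset.mem_univ k)

end Aux

/-- there exist T and c > 0 such that any product of T+1 matrices from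
𝒫_{G,ε} has all entries in [c,1]. -/
theorem stmt_4 (N : ℕ) (hN : 2 ≤ N) (G : SimpleGraph (Fin N))
    (hconn : G.Connected) (hnb : ¬ G.Colorable 2) (ε : ℝ) (hε : 0 < ε) :
    ∃ T : ℕ, ∃ c > 0, ∀ P : ℕ → Matrix (Fin N) (Fin N) ℝ,
      (∀ t, t ≤ T → P t ∈ Pset G ε) →
      ∀ i j, c ≤ bprod P T i j ∧ bprod P T i j ≤ 1 := by
  classical
  obtain ⟨M, hM1, hM⟩ := exists_uniform_walk_length hN hconn hnb
  refine ⟨M - 1, ε ^ M, by positivity, ?_⟩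
  intro P hP i j
  have hMeq : (M - 1) + 1 = M := by omega
  have hlow : ε ^ M ≤ bprod P (M - 1) i j := by
    have := bprod_lower hε (M - 1) hP i j (by rw [hMeq]; exact hM i j)
    rwa [hMeq] at this
  refine ⟨hlow, ?_⟩
  have hsum := bprod_rowsum hε (M - 1) hP i
  have hnn : ∀ k, 0 ≤ bprod P (M - 1) i k :=
    fun k => bprod_nonneg hε (M - 1) hP i k
  calc bprod P (M - 1) i j ≤ ∑ k, bprod P (M - 1) i k :=
        Finset.single_le_sum (fun k _ => hnn k) (Finset.mem_univ j)
    _ = 1 := hsum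
end

section
/- Let G be connected and non-bipartite, ε > 0, and let {D^(t)P^(t)}_{t≥0} be a sequence with D^(t) ∈ 𝒟 and P^(t) ∈ 𝒫_{G,ε} for all t. Set δ_t := ‖D^(t) − I_N‖_∞ and Q_{0,k} := D^(k)P^(k)⋯D^(0)P^(0). Suppose c ∈ (0,1) and T ∈ ℕ satisfy the contraction property ‖Q̂_{t₀,t₁+T}‖_∞ ≤ (1 − c·δ_{t₁})·‖Q̂_{t₀,t₁}‖_∞ for all 0 ≤ t₀ ≤ t₁, where Q̂_{t₀,s} := P^(s)D^(s−1)P^(s−1)⋯D^(t₀)P^(t₀) for s > t₀ (with Q̂_{t₀,t₀} := P^(t₀)). If β := lim_{k→∞} ∏_{t=0}^{k}(1 − c·δ_t) = 0, then lim_{k→∞} Q_{0,k} = 0. -/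
open Matrix Filter

namespace Stmt7Aux

lemma infNorm_nonneg {N : ℕ} (M : Matrix (Fin N) (Fin N) ℝ) : 0 ≤ infNorm M :=
  Real.iSup_nonneg fun _ => Finset.sum_nonneg fun _ _ => abs_nonneg _

lemma rowSum_le_infNorm {N : ℕ} (M : Matrix (Fin N) (Fin N) ℝ) (i : Fin N) :
    ∑ j, |M i j| ≤ infNorm M :=
  le_ciSup (f := fun i => ∑ j, |M i j|) (Set.Finite.bddAbove (Set.finite_range _)) i

lemma entry_le_infNorm {N : ℕ} (M : Matrix (Fin N) (Fin N) ℝ) (i j : Fin N) :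
    |M i j| ≤ infNorm M :=
  le_trans (Finset.single_le_sum (f := fun j => |M i j|)
    (fun _ _ => abs_nonneg _) (Finset.mem_univ j)) (rowSum_le_infNorm M i)

lemma infNorm_mul_le {N : ℕ} (hN : 0 < N) (A B : Matrix (Fin N) (Fin N) ℝ) :
    infNorm (A * B) ≤ infNorm A * infNorm B := by
  haveI : Nonempty (Fin N) := Fin.pos_iff_nonempty.mp hN
  apply ciSup_le
  intro i
  calc ∑ j, |(A * B) i j| ≤ ∑ j, ∑ k, |A i k| * |B k j| := by
        apply Finset.sum_le_sum; intro j _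
        rw [Matrix.mul_apply]
        calc |∑ k, A i k * B k j| ≤ ∑ k, |A i k * B k j| := Finset.abs_sum_le_sum_abs _ _
        _ = ∑ k, |A i k| * |B k j| := by simp [abs_mul]
    _ = ∑ k, |A i k| * ∑ j, |B k j| := by rw [Finset.sum_comm]; simp [Finset.mul_sum]
    _ ≤ ∑ k, |A i k| * infNorm B := by
        apply Finset.sum_le_sum; intro k _
        exact mul_le_mul_of_nonneg_left (rowSum_le_infNorm B k) (abs_nonneg _)
    _ = (∑ k, |A i k|) * infNorm B := by rw [Finset.sum_mul]
    _ ≤ infNorm A * infNorm B :=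
        mul_le_mul_of_nonneg_right (rowSum_le_infNorm A i) (infNorm_nonneg B)

lemma infNorm_rowStochastic {N : ℕ} (hN : 0 < N) (P : Matrix (Fin N) (Fin N) ℝ)
    (h : rowStochastic P) : infNorm P = 1 := by
  haveI : Nonempty (Fin N) := Fin.pos_iff_nonempty.mp hN
  have hs : ∀ i : Fin N, ∑ j, |P i j| = 1 := fun i => by
    rw [Finset.sum_congr rfl fun j _ => abs_of_nonneg (h.1 i j)]; exact h.2 i
  unfold infNorm
  simp only [hs]
  exact ciSup_const

lemma infNorm_Dset_le {N : ℕ} (hN : 0 < N) (D : Matrix (Fin N) (Fin N) ℝ)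
    (h : D ∈ Dset N) : infNorm D ≤ 1 := by
  haveI : Nonempty (Fin N) := Fin.pos_iff_nonempty.mp hN
  apply ciSup_le
  intro i
  have hs : ∑ j, |D i j| = |D i i| := by
    rw [Finset.sum_eq_single i]
    · intro b _ hb
      rw [h.1 (Ne.symm hb), abs_zero]
    · intro hi; exact absurd (Finset.mem_univ i) hi
  rw [hs, abs_of_nonneg (h.2 i).1]
  exact (h.2 i).2

lemma infNorm_sub_one_le {N : ℕ} (hN : 0 < N) (D : Matrix (Fin N) (Fin N) ℝ)
    (h : D ∈ Dset N) : infNorm (D - 1) ≤ 1 := by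
  haveI : Nonempty (Fin N) := Fin.pos_iff_nonempty.mp hN
  apply ciSup_le
  intro i
  have hs : ∑ j, |(D - 1) i j| = |D i i - 1| := by
    rw [Finset.sum_eq_single i]
    · simp [Matrix.sub_apply, Matrix.one_apply]
    · intro b _ hb
      simp [Matrix.sub_apply, Matrix.one_apply, Ne.symm hb, h.1 (Ne.symm hb)]
    · intro hi; exact absurd (Finset.mem_univ i) hi
  rw [hs, abs_of_nonpos (by linarith [(h.2 i).2])]
  linarith [(h.2 i).1]

end Stmt7Aux

/-- if β = lim ∏(1 − cδ_t) = 0 (given the contraction property),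
then Q_{0,k} → 0. -/
theorem stmt_7 (N : ℕ) (hN : 2 ≤ N) (G : SimpleGraph (Fin N))
    (hconn : G.Connected) (hnb : ¬ G.Colorable 2) (ε : ℝ) (hε : 0 < ε)
    (D P : ℕ → Matrix (Fin N) (Fin N) ℝ)
    (hD : ∀ t, D t ∈ Dset N) (hP : ∀ t, P t ∈ Pset G ε)
    (c : ℝ) (hc0 : 0 < c) (hc1 : c < 1) (T : ℕ)
    (hcontr : ∀ t₀ t₁ : ℕ, t₀ ≤ t₁ →
      infNorm (Qhat D P t₀ (t₁ + T - t₀)) ≤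
        (1 - c * infNorm (D t₁ - 1)) * infNorm (Qhat D P t₀ (t₁ - t₀)))
    (hβ : Tendsto (fun k => ∏ t ∈ Finset.range (k + 1), (1 - c * infNorm (D t - 1)))
      atTop (nhds 0)) :
    Tendsto (fun k => Qprod D P k) atTop (nhds 0) := by
  have hN0 : 0 < N := by omega
  set δ : ℕ → ℝ := fun t => infNorm (D t - 1) with hδdef
  set a : ℕ → ℝ := fun k => infNorm (Qhat D P 0 k) with hadef
  have hann : ∀ k, 0 ≤ a k := fun k => Stmt7Aux.infNorm_nonneg _
  have hδnn : ∀ t, 0 ≤ δ t := fun t => Stmt7Aux.infNorm_nonneg _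
  have hδle : ∀ t, δ t ≤ 1 := fun t => Stmt7Aux.infNorm_sub_one_le hN0 _ (hD t)
  have hfactor_pos : ∀ t, 0 < 1 - c * δ t := by
    intro t; nlinarith [hδnn t, hδle t]
  have hPn : ∀ t, infNorm (P t) = 1 := fun t =>
    Stmt7Aux.infNorm_rowStochastic hN0 _ (hP t).1
  have hDn : ∀ t, infNorm (D t) ≤ 1 := fun t => Stmt7Aux.infNorm_Dset_le hN0 _ (hD t)
  have hstep : ∀ k, a (k + 1) ≤ a k := by
    intro k
    have hq : Qhat D P 0 (k + 1) = P (0 + k + 1) * D (0 + k) * Qhat D P 0 k := rfl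
    calc a (k + 1) = infNorm (P (k + 1) * D k * Qhat D P 0 k) := by
          simp only [hadef]; rw [hq]; norm_num
      _ ≤ infNorm (P (k + 1) * D k) * a k := Stmt7Aux.infNorm_mul_le hN0 _ _
      _ ≤ (infNorm (P (k + 1)) * infNorm (D k)) * a k :=
          mul_le_mul_of_nonneg_right (Stmt7Aux.infNorm_mul_le hN0 _ _) (hann k)
      _ ≤ 1 * a k := by
          apply mul_le_mul_of_nonneg_right _ (hann k)
          rw [hPn]; simpa using hDn k
      _ = a k := one_mul _
  have hanti : Antitone a := antitone_nat_of_succ_le hstep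
  have ha0 : a 0 = 1 := hPn 0
  have hale1 : ∀ k, a k ≤ 1 := fun k => ha0 ▸ hanti (Nat.zero_le k)
  set T' := max T 1 with hT'
  have hT'pos : 1 ≤ T' := le_max_right _ _
  have hkey : ∀ k, a (k + T') ≤ (1 - c * δ k) * a k := by
    rcases Nat.eq_zero_or_pos T with hT0 | hTpos
    · intro k
      have h := hcontr 0 k (Nat.zero_le k)
      simp only [hT0, Nat.add_zero, Nat.sub_zero] at h
      have h1 : δ k * a k = 0 := by nlinarith [hann k, hδnn k]
      have h2 : (1 - c * δ k) * a k = a k := by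
        have : c * δ k * a k = 0 := by rw [mul_assoc, h1, mul_zero]
        nlinarith [this]
      rw [h2]
      have hT1 : T' = 1 := by omega
      rw [hT1]
      exact hstep k
    · intro k
      have hTT : T' = T := by omega
      have h := hcontr 0 k (Nat.zero_le k)
      simp only [Nat.sub_zero] at h
      rw [hTT]
      exact h
  set F : ℕ → ℝ := fun k => ∏ t ∈ Finset.range k, (1 - c * δ t) with hFdef
  set g : ℕ → ℝ := fun k => ∏ j ∈ Finset.range T', a (k + j) with hgdef
  have hgF : ∀ k, g k ≤ F k := by
    intro k
    induction k with
    | zero =>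
      simp only [hgdef, hFdef, Finset.range_zero, Finset.prod_empty]
      exact Finset.prod_le_one (fun j _ => hann _) (fun j _ => hale1 _)
    | succ k ih =>
      obtain ⟨m, hm⟩ : ∃ m, T' = m + 1 := ⟨T' - 1, by omega⟩
      have hgsplit : g (k + 1) = (∏ j ∈ Finset.range m, a (k + 1 + j)) * a (k + 1 + m) := by
        simp only [hgdef, hm]
        rw [Finset.prod_range_succ]
      have hgksplit : g k = (∏ j ∈ Finset.range m, a (k + 1 + j)) * a k := by
        simp only [hgdef, hm]
        rw [Finset.prod_range_succ']
        congr 1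
        exact Finset.prod_congr rfl fun j _ => by congr 1; omega
      have hQnn : 0 ≤ ∏ j ∈ Finset.range m, a (k + 1 + j) :=
        Finset.prod_nonneg fun _ _ => hann _
      have hk' : a (k + 1 + m) ≤ (1 - c * δ k) * a k := by
        have he : k + 1 + m = k + T' := by omega
        rw [he]; exact hkey k
      calc g (k + 1) = (∏ j ∈ Finset.range m, a (k + 1 + j)) * a (k + 1 + m) := hgsplit
        _ ≤ (∏ j ∈ Finset.range m, a (k + 1 + j)) * ((1 - c * δ k) * a k) :=
            mul_le_mul_of_nonneg_left hk' hQnn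
        _ = (1 - c * δ k) * g k := by rw [hgksplit]; ring
        _ ≤ (1 - c * δ k) * F k := mul_le_mul_of_nonneg_left ih (hfactor_pos k).le
        _ = F (k + 1) := by simp only [hFdef]; rw [Finset.prod_range_succ]; ring
  have hpow : ∀ k, a (k + T') ^ T' ≤ F k := by
    intro k
    calc a (k + T') ^ T' = ∏ _j ∈ Finset.range T', a (k + T') := by
          rw [Finset.prod_const, Finset.card_range]
      _ ≤ g k := Finset.prod_le_prod (fun _ _ => hann _)
          (fun j hj => hanti (by
            have := Finset.mem_range.mp hj; omega))
      _ ≤ F k := hgF k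
  have hT'ne : (T' : ℝ) ≠ 0 := Nat.cast_ne_zero.mpr (by omega)
  have hrb : ∀ k, a (k + T') ≤ F k ^ ((T' : ℝ)⁻¹) := by
    intro k
    have h1 : a (k + T') = ((a (k + T') ^ T' : ℝ)) ^ ((T' : ℝ)⁻¹) := by
      rw [← Real.rpow_natCast (a (k + T')) T', ← Real.rpow_mul (hann _),
        mul_inv_cancel₀ hT'ne, Real.rpow_one]
    rw [h1]
    exact Real.rpow_le_rpow (pow_nonneg (hann _) _) (hpow k) (by positivity)
  have hF0 : Tendsto F atTop (nhds 0) := (tendsto_add_atTop_iff_nat 1).mp hβ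
  have hrpow0 : Tendsto (fun k => F k ^ ((T' : ℝ)⁻¹)) atTop (nhds 0) := by
    have h := hF0.rpow_const (p := (T' : ℝ)⁻¹) (Or.inr (by positivity))
    rwa [Real.zero_rpow (inv_ne_zero hT'ne)] at h
  have haT : Tendsto (fun k => a (k + T')) atTop (nhds 0) :=
    squeeze_zero (fun k => hann _) hrb hrpow0
  have haz : Tendsto a atTop (nhds 0) := (tendsto_add_atTop_iff_nat T').mp haT
  have hQ : ∀ k, Qprod D P k = D k * Qhat D P 0 k := by
    intro k
    induction k with
    | zero => rfl
    | succ k ih =>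
      show D (k + 1) * P (k + 1) * Qprod D P k = D (k + 1) * Qhat D P 0 (k + 1)
      rw [ih]
      have hq : Qhat D P 0 (k + 1) = P (0 + k + 1) * D (0 + k) * Qhat D P 0 k := rfl
      rw [hq]
      simp only [Nat.zero_add]
      simp [Matrix.mul_assoc]
  have hentry : ∀ k (i j : Fin N), |Qprod D P k i j| ≤ a k := by
    intro k i j
    calc |Qprod D P k i j| ≤ infNorm (Qprod D P k) := Stmt7Aux.entry_le_infNorm _ _ _
      _ = infNorm (D k * Qhat D P 0 k) := by rw [hQ k]
      _ ≤ infNorm (D k) * a k := Stmt7Aux.infNorm_mul_le hN0 _ _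
      _ ≤ 1 * a k := mul_le_mul_of_nonneg_right (hDn k) (hann k)
      _ = a k := one_mul _
  refine tendsto_pi_nhds.mpr ?_
  intro i
  rw [tendsto_pi_nhds]
  intro j
  simp only [Matrix.zero_apply, Pi.zero_apply]
  apply squeeze_zero_norm (fun k => ?_) haz
  rw [Real.norm_eq_abs]
  exact hentry k i j
end

section
/- Let {D^(t)P^(t)}_{t≥0} be a sequence where each D^(t) ∈ 𝒟 and each P^(t) ∈ ℝ^{N×N} is row-stochastic (entrywise nonnegative with every row summing to 1). Set δ_t := ‖D^(t) − I_N‖_∞. Then for all 0 ≤ m ≤ M the entrywise inequalities hold: (∏_{t=m}^{M}(1 − δ_t))·P^(M)P^(M−1)⋯P^(m) ≤_ew D^(M)P^(M)D^(M−1)P^(M−1)⋯D^(m)P^(m) ≤_ew P^(M)P^(M−1)⋯P^(m). -/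
open Matrix Filter

section Aux

variable {N : ℕ}

lemma diag_mul_apply (D M : Matrix (Fin N) (Fin N) ℝ) (hD : D.IsDiag) (i j : Fin N) :
    (D * M) i j = D i i * M i j := by
  rw [Matrix.mul_apply]
  refine Finset.sum_eq_single i (fun r _ hr => by rw [hD (Ne.symm hr), zero_mul]) (by simp)

lemma rowsum_eq (D : Matrix (Fin N) (Fin N) ℝ) (hD : D ∈ Dset N) (i : Fin N) :
    ∑ j, |(D - 1) i j| = 1 - D i i := by
  have : ∀ j, |(D - 1) i j| = if j = i then 1 - D i i else 0 := by
    intro j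
    by_cases h : j = i
    · subst h
      rw [if_pos rfl]
      simp only [Matrix.sub_apply, Matrix.one_apply_eq]
      rw [abs_of_nonpos (by linarith [(hD.2 j).2])]
      ring
    · simp [Matrix.sub_apply, Matrix.one_apply_ne' h, hD.1 (Ne.symm h), h]
  calc ∑ j, |(D - 1) i j| = ∑ j, if j = i then 1 - D i i else 0 :=
        Finset.sum_congr rfl fun j _ => this j
    _ = 1 - D i i := by simp

lemma infNorm_key (hN : 1 ≤ N) (D : Matrix (Fin N) (Fin N) ℝ) (hD : D ∈ Dset N) :
    (∀ i, 1 - infNorm (D - 1) ≤ D i i) ∧ 0 ≤ 1 - infNorm (D - 1) := by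
  have hne : Nonempty (Fin N) := ⟨⟨0, hN⟩⟩
  constructor
  · intro i
    have : (1 : ℝ) - D i i ≤ infNorm (D - 1) := by
      rw [← rowsum_eq D hD i]
      unfold infNorm
      exact le_ciSup (f := fun i => ∑ j, |(D - 1) i j|) (Set.Finite.bddAbove (Set.finite_range _)) i
    linarith
  · have : infNorm (D - 1) ≤ 1 := by
      apply ciSup_le
      intro i
      rw [rowsum_eq D hD i]
      linarith [(hD.2 i).1]
    linarith

lemma PprodFrom_nonneg (P : ℕ → Matrix (Fin N) (Fin N) ℝ)
    (hP : ∀ t, rowStochastic (P t)) (m k : ℕ) (i j : Fin N) :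
    0 ≤ PprodFrom P m k i j := by
  induction k generalizing i j with
  | zero => exact (hP m).1 i j
  | succ k ih =>
    show 0 ≤ (P (m + k + 1) * PprodFrom P m k) i j
    rw [Matrix.mul_apply]
    exact Finset.sum_nonneg fun l _ => mul_nonneg ((hP _).1 i l) (ih l j)

lemma sandwich (hN : 1 ≤ N) (D P : ℕ → Matrix (Fin N) (Fin N) ℝ)
    (hD : ∀ t, D t ∈ Dset N) (hP : ∀ t, rowStochastic (P t)) (m : ℕ) :
    ∀ k : ℕ, ∀ i j,
      (∏ t ∈ Finset.Icc m (m + k), (1 - infNorm (D t - 1))) * PprodFrom P m k i j ≤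
        QprodFrom D P m k i j ∧
      QprodFrom D P m k i j ≤ PprodFrom P m k i j := by
  have hc : ∀ k, 0 ≤ ∏ t ∈ Finset.Icc m (m + k), (1 - infNorm (D t - 1)) := fun k =>
    Finset.prod_nonneg fun t _ => (infNorm_key hN (D t) (hD t)).2
  intro k
  induction k with
  | zero =>
    intro i j
    have hdle := (hD m).2 i
    have hkey := infNorm_key hN (D m) (hD m)
    have hQ : QprodFrom D P m 0 i j = D m i i * P m i j :=
      diag_mul_apply (D m) (P m) (hD m).1 i j
    have hPn : 0 ≤ P m i j := (hP m).1 i j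
    constructor
    · rw [hQ]
      simp only [Nat.add_zero, Finset.Icc_self, Finset.prod_singleton]
      exact mul_le_mul_of_nonneg_right (hkey.1 i) hPn
    · rw [hQ]
      calc D m i i * P m i j ≤ 1 * P m i j :=
            mul_le_mul_of_nonneg_right hdle.2 hPn
        _ = P m i j := one_mul _
  | succ k ih =>
    intro i j
    set t := m + k + 1 with ht
    have hprod : ∏ s ∈ Finset.Icc m (m + (k + 1)), (1 - infNorm (D s - 1)) =
        (∏ s ∈ Finset.Icc m (m + k), (1 - infNorm (D s - 1))) * (1 - infNorm (D t - 1)) := by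
      have : m + (k + 1) = (m + k) + 1 := by ring
      rw [this, Finset.prod_Icc_succ_top (by omega)]
    have hQ : QprodFrom D P m (k + 1) i j =
        D t i i * ∑ l, P t i l * QprodFrom D P m k l j := by
      show (D t * P t * QprodFrom D P m k) i j = _
      rw [Matrix.mul_assoc, diag_mul_apply (D t) _ (hD t).1, Matrix.mul_apply]
    have hPe : PprodFrom P m (k + 1) i j = ∑ l, P t i l * PprodFrom P m k l j := by
      show (P t * PprodFrom P m k) i j = _
      rw [Matrix.mul_apply]
    have hkey := infNorm_key hN (D t) (hD t)
    set c := ∏ s ∈ Finset.Icc m (m + k), (1 - infNorm (D s - 1)) with hcdef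
    have hsum_le : ∑ l, P t i l * (c * PprodFrom P m k l j) ≤
        ∑ l, P t i l * QprodFrom D P m k l j :=
      Finset.sum_le_sum fun l _ =>
        mul_le_mul_of_nonneg_left (ih l j).1 ((hP t).1 i l)
    have hsum_nonneg : 0 ≤ ∑ l, P t i l * (c * PprodFrom P m k l j) :=
      Finset.sum_nonneg fun l _ => mul_nonneg ((hP t).1 i l)
        (mul_nonneg (hc k) (PprodFrom_nonneg P hP m k l j))
    constructor
    · rw [hQ, hPe, hprod]
      calc c * (1 - infNorm (D t - 1)) * ∑ l, P t i l * PprodFrom P m k l j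
          = (1 - infNorm (D t - 1)) * ∑ l, P t i l * (c * PprodFrom P m k l j) := by
            rw [Finset.mul_sum]; rw [Finset.mul_sum]; congr 1; funext l; ring
        _ ≤ D t i i * ∑ l, P t i l * QprodFrom D P m k l j :=
            mul_le_mul (hkey.1 i) hsum_le hsum_nonneg (by linarith [(hD t).2 i])
    · rw [hQ, hPe]
      have hs1 : ∑ l, P t i l * QprodFrom D P m k l j ≤
          ∑ l, P t i l * PprodFrom P m k l j :=
        Finset.sum_le_sum fun l _ =>
          mul_le_mul_of_nonneg_left (ih l j).2 ((hP t).1 i l)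
      have hs0 : 0 ≤ ∑ l, P t i l * QprodFrom D P m k l j :=
        le_trans hsum_nonneg hsum_le
      calc D t i i * ∑ l, P t i l * QprodFrom D P m k l j
          ≤ 1 * ∑ l, P t i l * QprodFrom D P m k l j :=
            mul_le_mul_of_nonneg_right ((hD t).2 i).2 hs0
        _ ≤ ∑ l, P t i l * PprodFrom P m k l j := by rw [one_mul]; exact hs1

end Aux

/-- entrywise sandwich inequality
(∏_{t=m}^{M}(1 − δ_t))·P^(M)⋯P^(m) ≤_ew D^(M)P^(M)⋯D^(m)P^(m) ≤_ew P^(M)⋯P^(m). -/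
theorem stmt_9 (N : ℕ) (hN : 1 ≤ N)
    (D P : ℕ → Matrix (Fin N) (Fin N) ℝ)
    (hD : ∀ t, D t ∈ Dset N) (hP : ∀ t, rowStochastic (P t)) :
    ∀ m M : ℕ, m ≤ M → ∀ i j,
      (∏ t ∈ Finset.Icc m M, (1 - infNorm (D t - 1))) * PprodFrom P m (M - m) i j ≤
        QprodFrom D P m (M - m) i j ∧
      QprodFrom D P m (M - m) i j ≤ PprodFrom P m (M - m) i j := by
  intro m M hmM i j
  have h := sandwich hN D P hD hP m (M - m) i j
  rwa [Nat.add_sub_cancel' hmM] at h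
end

section
/- Let G be connected and non-bipartite and let ε > 0. Then every sequence {M^(t)}_{t≥0} with M^(t) ∈ ℳ_{G,ε} for all t ≥ 0 is ergodic; that is, lim_{t→∞} J·M^(t)M^(t−1)⋯M^(0) = 0. -/
open Matrix Filter

open Matrix Filter SimpleGraph

section graphAux

variable {V : Type*} {G : SimpleGraph V}

lemma aux_exists_adj (hc : G.Connected) [Nontrivial V] (v : V) : ∃ u, G.Adj v u := by
  obtain ⟨u, hu⟩ := exists_ne v
  obtain ⟨w⟩ := hc v u
  cases w with
  | nil => exact absurd rfl hu.symm
  | cons h p => exact ⟨_, h⟩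

lemma aux_even_closed {v u : V} (h : G.Adj v u) (s : ℕ) :
    ∃ w : G.Walk v v, w.length = 2 * s := by
  induction s with
  | zero => exact ⟨Walk.nil, rfl⟩
  | succ s ih =>
    obtain ⟨w, hw⟩ := ih
    exact ⟨Walk.cons h (Walk.cons h.symm w), by simp [hw]; ring⟩

lemma aux_exists_odd_closed (hc : G.Connected) (hnb : ¬ G.Colorable 2) (v₀ : V) :
    ∃ w : G.Walk v₀ v₀, Odd w.length := by
  by_contra hno
  push_neg at hno
  apply hnb
  refine ⟨SimpleGraph.Coloring.mk (fun v => if Even (G.dist v₀ v) then 0 else 1) ?_⟩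
  intro u w huw hcol
  obtain ⟨p, hp⟩ := hc.exists_walk_length_eq_dist v₀ u
  obtain ⟨q, hq⟩ := hc.exists_walk_length_eq_dist v₀ w
  have hkey := hno (p.append ((Walk.cons huw q.reverse)))
  simp only [Walk.length_append, Walk.length_cons, Walk.length_reverse] at hkey
  rw [Nat.odd_iff] at hkey
  have hpar : Even (G.dist v₀ u) ↔ Even (G.dist v₀ w) := by
    by_cases h1 : Even (G.dist v₀ u) <;> by_cases h2 : Even (G.dist v₀ w) <;>
      simp [h1, h2] at hcol ⊢ <;> tauto
  rw [Nat.even_iff, Nat.even_iff] at hpar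
  omega

lemma aux_closed_all (hc : G.Connected) [Nontrivial V] {v₀ : V}
    (wodd : G.Walk v₀ v₀) (hodd : Odd wodd.length) (r : ℕ) (hr : wodd.length ≤ r) :
    ∃ w : G.Walk v₀ v₀, w.length = r := by
  obtain ⟨u, hu⟩ := aux_exists_adj hc v₀
  rcases Nat.even_or_odd r with he | ho
  · obtain ⟨s, hs⟩ := he
    obtain ⟨w, hw⟩ := aux_even_closed hu s
    exact ⟨w, by omega⟩
  · have : ∃ s, r = wodd.length + 2 * s := by
      rcases ho with ⟨a, ha⟩; rcases hodd with ⟨b, hb⟩; exact ⟨a - b, by omega⟩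
    obtain ⟨s, hs⟩ := this
    obtain ⟨w, hw⟩ := aux_even_closed hu s
    exact ⟨wodd.append w, by simp [Walk.length_append]; omega⟩

end graphAux

lemma aux_exists_K {N : ℕ} (hN : 2 ≤ N) (G : SimpleGraph (Fin N))
    (hconn : G.Connected) (hnb : ¬ G.Colorable 2) :
    ∃ K : ℕ, ∀ i j : Fin N, ∃ w : G.Walk i j, w.length = K := by
  have : Nontrivial (Fin N) := Fin.nontrivial_iff_two_le.mpr hN
  set v₀ : Fin N := ⟨0, by omega⟩
  obtain ⟨c, hcodd⟩ := aux_exists_odd_closed hconn hnb v₀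
  set D : ℕ := Finset.univ.sup (fun i : Fin N => G.dist i v₀) with hD
  refine ⟨2 * D + c.length, fun i j => ?_⟩
  obtain ⟨p, hp⟩ := hconn.exists_walk_length_eq_dist i v₀
  obtain ⟨q, hq⟩ := hconn.exists_walk_length_eq_dist v₀ j
  have hp' : p.length ≤ D := by
    rw [hp]; exact Finset.le_sup (f := fun i : Fin N => G.dist i v₀) (Finset.mem_univ i)
  have hq' : q.length ≤ D := by
    rw [hq, G.dist_comm]; exact Finset.le_sup (f := fun i : Fin N => G.dist i v₀) (Finset.mem_univ j)
  obtain ⟨m, hm⟩ := aux_closed_all hconn c hcodd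
    (2 * D + c.length - p.length - q.length) (by omega)
  exact ⟨p.append (m.append q), by simp [Walk.length_append]; omega⟩

section mainAux

open Matrix Filter SimpleGraph in
theorem stmt_10' (N : ℕ) (hN : 2 ≤ N) (G : SimpleGraph (Fin N))
    (hconn : G.Connected) (hnb : ¬ G.Colorable 2) (ε : ℝ) (hε : 0 < ε)
    (M : ℕ → Matrix (Fin N) (Fin N) ℝ) (hM : ∀ t, M t ∈ Mset G ε) :
    Filter.Tendsto (fun t => projJ N * bprod M t) Filter.atTop (nhds 0) := by
  classical
  have hNpos : 0 < N := by omega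
  have hNe : Nonempty (Fin N) := ⟨⟨0, hNpos⟩⟩
  have hU : (Finset.univ : Finset (Fin N)).Nonempty := Finset.univ_nonempty
  choose D hD P hP hMDP using hM
  set ε' : ℝ := min ε 1 with hε'def
  have hε'0 : 0 < ε' := lt_min hε one_pos
  have hε'1 : ε' ≤ 1 := min_le_right _ _
  obtain ⟨K, hK⟩ := aux_exists_K hN G hconn hnb
  have hPnn : ∀ t i j, 0 ≤ P t i j := fun t => (hP t).1.1
  have hProw : ∀ t i, ∑ j, P t i j = 1 := fun t => (hP t).1.2
  have hPadj : ∀ t i j, G.Adj i j → ε' ≤ P t i j := fun t i j h =>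
    le_trans (min_le_left _ _) ((hP t).2.1 i j h).1
  have hDnn : ∀ t i, 0 ≤ D t i i := fun t i => ((hD t).2 i).1
  have hD1 : ∀ t i, D t i i ≤ 1 := fun t i => ((hD t).2 i).2
  have hMentry : ∀ t i j, M t i j = D t i i * P t i j := by
    intro t i j
    rw [hMDP t, Matrix.mul_apply]
    rw [Finset.sum_eq_single i]
    · intro k _ hk
      rw [(hD t).1 (Ne.symm hk), zero_mul]
    · intro h; exact absurd (Finset.mem_univ i) h
  have hMnn : ∀ t i j, 0 ≤ M t i j := fun t i j => by
    rw [hMentry]; exact mul_nonneg (hDnn t i) (hPnn t i j)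
  have key : ∀ i0 j0 : Fin N,
      Filter.Tendsto (fun t => (projJ N * bprod M t) i0 j0) Filter.atTop (nhds 0) := by
    intro i0 j0
    set x : ℕ → Fin N → ℝ := fun t k => bprod M t k j0 with hxdef
    have hxnn : ∀ t k, 0 ≤ x t k := by
      intro t
      induction t with
      | zero => intro k; exact hMnn 0 k j0
      | succ t ih =>
        intro k
        show 0 ≤ (M (t + 1) * bprod M t) k j0
        rw [Matrix.mul_apply]
        exact Finset.sum_nonneg fun m _ => mul_nonneg (hMnn _ _ _) (ih m)
    set b : ℕ → ℝ := fun t => Finset.univ.sup' hU (x t) with hbdef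
    set a : ℕ → ℝ := fun t => Finset.univ.inf' hU (x t) with hadef
    have hub : ∀ t k, x t k ≤ b t := fun t k => Finset.le_sup' (x t) (Finset.mem_univ k)
    have hlb : ∀ t k, a t ≤ x t k := fun t k => Finset.inf'_le (x t) (Finset.mem_univ k)
    have hb0 : ∀ t, 0 ≤ b t := fun t => le_trans (hxnn t ⟨0, hNpos⟩) (hub t _)
    have hstep : ∀ t k, x (t + 1) k ≤ ∑ m, P (t + 1) k m * x t m := by
      intro t k
      show (M (t + 1) * bprod M t) k j0 ≤ _
      rw [Matrix.mul_apply]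
      refine Finset.sum_le_sum fun m _ => ?_
      rw [hMentry, mul_assoc]
      calc D (t+1) k k * (P (t + 1) k m * x t m)
          ≤ 1 * (P (t + 1) k m * x t m) :=
            mul_le_mul_of_nonneg_right (hD1 _ _) (mul_nonneg (hPnn _ _ _) (hxnn t m))
        _ = P (t + 1) k m * x t m := one_mul _
    have hsum_le_b : ∀ t k, ∑ m, P (t + 1) k m * x t m ≤ b t := by
      intro t k
      calc ∑ m, P (t + 1) k m * x t m ≤ ∑ m, P (t + 1) k m * b t :=
            Finset.sum_le_sum fun m _ => mul_le_mul_of_nonneg_left (hub t m) (hPnn _ _ _)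
        _ = b t := by rw [← Finset.sum_mul, hProw, one_mul]
    have hbmono : ∀ t, b (t + 1) ≤ b t := fun t =>
      Finset.sup'_le _ _ fun k _ => (hstep t k).trans (hsum_le_b t k)
    have chain : ∀ (k₀ j : Fin N) (w : G.Walk k₀ j) (t₀ : ℕ),
        ε' ^ w.length * (b t₀ - x t₀ k₀) ≤ b t₀ - x (t₀ + w.length) j := by
      intro k₀ j w
      induction w with
      | nil => intro t₀; simp
      | @cons k₀ u j h p ih =>
        intro t₀
        have hΔ : 0 ≤ b t₀ - x t₀ k₀ := sub_nonneg.mpr (hub t₀ k₀)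
        have hstepu : x (t₀ + 1) u ≤ b t₀ - ε' * (b t₀ - x t₀ k₀) := by
          have h1 := hstep t₀ u
          have h2 : P (t₀ + 1) u k₀ * (b t₀ - x t₀ k₀)
              ≤ ∑ mm, P (t₀ + 1) u mm * (b t₀ - x t₀ mm) :=
            Finset.single_le_sum (f := fun mm => P (t₀ + 1) u mm * (b t₀ - x t₀ mm))
              (fun mm _ => mul_nonneg (hPnn _ _ _) (sub_nonneg.mpr (hub t₀ mm)))
              (Finset.mem_univ k₀)
          have h3 : ∑ mm, P (t₀ + 1) u mm * (b t₀ - x t₀ mm)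
              = b t₀ - ∑ mm, P (t₀ + 1) u mm * x t₀ mm := by
            simp only [mul_sub]
            rw [Finset.sum_sub_distrib, ← Finset.sum_mul, hProw, one_mul]
          have h4 : ε' ≤ P (t₀ + 1) u k₀ := hPadj _ _ _ h.symm
          nlinarith [mul_le_mul_of_nonneg_right h4 hΔ]
        have IH := ih (t₀ + 1)
        have hbm := hbmono t₀
        have hpl : (0:ℝ) ≤ ε' ^ p.length := pow_nonneg hε'0.le _
        have hpl1 : ε' ^ p.length ≤ 1 := pow_le_one₀ hε'0.le hε'1
        have hidx : t₀ + (SimpleGraph.Walk.cons h p).length = (t₀ + 1) + p.length := by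
          rw [SimpleGraph.Walk.length_cons]; omega
        rw [hidx, SimpleGraph.Walk.length_cons, pow_succ]
        have e1 := mul_le_mul_of_nonneg_left hstepu hpl
        have e2 : 0 ≤ (1 - ε' ^ p.length) * (b t₀ - b (t₀ + 1)) :=
          mul_nonneg (by linarith) (by linarith)
        nlinarith [IH, e1, e2]
    have hosc : ∀ t, ε' ^ K * (b t - a t) ≤ b t - b (t + K) := by
      intro t
      obtain ⟨k₀, _, hk₀⟩ := Finset.exists_mem_eq_inf' hU (x t)
      have hxj : ∀ j, x (t + K) j ≤ b t - ε' ^ K * (b t - a t) := by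
        intro j
        obtain ⟨w, hw⟩ := hK k₀ j
        have hc := chain k₀ j w t
        rw [hw] at hc
        have : a t = x t k₀ := hk₀
        rw [this]
        linarith
      have hsup : b (t + K) ≤ b t - ε' ^ K * (b t - a t) :=
        Finset.sup'_le _ _ fun j _ => hxj j
      linarith
    have hpK : (0:ℝ) < ε' ^ K := pow_pos hε'0 K
    have hosc' : ∀ t, b t - a t ≤ (b t - b (t + K)) * (ε' ^ K)⁻¹ := by
      intro t
      have h := hosc t
      calc b t - a t = ε' ^ K * (b t - a t) * (ε' ^ K)⁻¹ := by field_simp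
        _ ≤ (b t - b (t + K)) * (ε' ^ K)⁻¹ :=
            mul_le_mul_of_nonneg_right h (inv_nonneg.mpr hpK.le)
    obtain ⟨L, hL⟩ : ∃ L, Filter.Tendsto b Filter.atTop (nhds L) := by
      refine ⟨_, tendsto_atTop_ciInf (antitone_nat_of_succ_le hbmono) ⟨0, ?_⟩⟩
      rintro y ⟨t, rfl⟩; exact hb0 t
    have hg : Filter.Tendsto (fun t => (b t - b (t + K)) * (ε' ^ K)⁻¹)
        Filter.atTop (nhds 0) := by
      have h2 : Filter.Tendsto (fun t => b (t + K)) Filter.atTop (nhds L) :=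
        hL.comp (Filter.tendsto_add_atTop_nat K)
      have := (hL.sub h2).mul_const (ε' ^ K)⁻¹
      simpa using this
    have hentry : ∀ t, (projJ N * bprod M t) i0 j0
        = x t i0 - (N:ℝ)⁻¹ * ∑ k, x t k := by
      intro t
      rw [projJ, Matrix.sub_mul, Matrix.one_mul, Matrix.sub_apply,
        Matrix.smul_mul, Matrix.smul_apply, Matrix.mul_apply]
      simp [smul_eq_mul]
      rfl
    have hmean : ∀ t, a t ≤ (N:ℝ)⁻¹ * ∑ k, x t k ∧ (N:ℝ)⁻¹ * ∑ k, x t k ≤ b t := by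
      intro t
      have hNR : (0:ℝ) < (N:ℝ) := by exact_mod_cast hNpos
      have hs1 : (N:ℝ) * a t ≤ ∑ k, x t k := by
        calc (N:ℝ) * a t = ∑ _k : Fin N, a t := by
              rw [Finset.sum_const, Finset.card_univ, Fintype.card_fin, nsmul_eq_mul]
          _ ≤ ∑ k, x t k := Finset.sum_le_sum fun k _ => hlb t k
      have hs2 : ∑ k, x t k ≤ (N:ℝ) * b t := by
        calc ∑ k, x t k ≤ ∑ _k : Fin N, b t := Finset.sum_le_sum fun k _ => hub t k
          _ = (N:ℝ) * b t := by
              rw [Finset.sum_const, Finset.card_univ, Fintype.card_fin, nsmul_eq_mul]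
      constructor
      · have := mul_le_mul_of_nonneg_left hs1 (inv_nonneg.mpr hNR.le)
        rw [← mul_assoc, inv_mul_cancel₀ hNR.ne', one_mul] at this
        linarith
      · have := mul_le_mul_of_nonneg_left hs2 (inv_nonneg.mpr hNR.le)
        rw [← mul_assoc, inv_mul_cancel₀ hNR.ne', one_mul] at this
        linarith
    simp only [hentry]
    have hgneg : Filter.Tendsto (fun t => -((b t - b (t + K)) * (ε' ^ K)⁻¹))
        Filter.atTop (nhds 0) := by simpa using hg.neg
    refine tendsto_of_tendsto_of_tendsto_of_le_of_le hgneg hg ?_ ?_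
    · intro t
      have h1 := (hmean t).2
      have h2 := hlb t i0
      have h3 := hosc' t
      simp only
      linarith
    · intro t
      have h1 := (hmean t).1
      have h2 := hub t i0
      have h3 := hosc' t
      simp only
      linarith
  rw [show (0 : Matrix (Fin N) (Fin N) ℝ) = fun _ _ => (0:ℝ) from rfl]
  refine tendsto_pi_nhds.mpr fun i => tendsto_pi_nhds.mpr fun j => ?_
  exact key i j

end mainAux

/-- every sequence in ℳ_{G,ε} is ergodic. -/
theorem stmt_10 (N : ℕ) (hN : 2 ≤ N) (G : SimpleGraph (Fin N))
    (hconn : G.Connected) (hnb : ¬ G.Colorable 2) (ε : ℝ) (hε : 0 < ε)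
    (M : ℕ → Matrix (Fin N) (Fin N) ℝ) (hM : ∀ t, M t ∈ Mset G ε) :
    Tendsto (fun t => projJ N * bprod M t) atTop (nhds 0) := by
  exact stmt_10' N hN G hconn hnb ε hε M hM
end
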